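/- For each real A > 2, let q_A be a geometric random variable with P(q_A = k) = (2/A)(1 - 2/A)^{k-1} for integers k ≥ 1. Then E[(1 - 2/A)^{√(2 q_A)}] → 1 and E[(1 - 2/A)^{-√(2 q_A)}] → 1 as A → ∞; in particular, the latter expectation is finite for every A > 2. -/

import Mathlib

open MeasureTheory Filter

set_option maxHeartbeats 1600000 in
lemma geo_aux (p : ℝ) (hp : 0 < p) (hp1 : p < 1) :
    Summable (fun j : ℕ => p * (1 - p) ^ j * (1 - p) ^ (-Real.sqrt (2 * ((j : ℝ) + 1)))) ∧
    (∑' j : ℕ, p * (1 - p) ^ j * (1 - p) ^ (-Real.sqrt (2 * ((j : ℝ) + 1)))) ≤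
      Real.exp (Real.sqrt p / (2 * (1 - p) ^ 2) + p * Real.sqrt p) *
        (1 - p * Real.sqrt p) / (1 - Real.sqrt p) ∧
    1 ≤ (∑' j : ℕ, p * (1 - p) ^ j * (1 - p) ^ (-Real.sqrt (2 * ((j : ℝ) + 1)))) ∧
    (∑' j : ℕ, p * (1 - p) ^ j * (1 - p) ^ (Real.sqrt (2 * ((j : ℝ) + 1)))) ≤ 1 ∧
    1 - 3 * Real.sqrt p / (2 * (1 - p)) ≤
      (∑' j : ℕ, p * (1 - p) ^ j * (1 - p) ^ (Real.sqrt (2 * ((j : ℝ) + 1)))) := by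
  set r : ℝ := 1 - p with hrdef
  set s : ℝ := Real.sqrt p with hsdef
  have hr0 : 0 < r := by simp [hrdef]; linarith
  have hr1 : r < 1 := by simp [hrdef]; linarith
  have hs0 : 0 < s := Real.sqrt_pos.2 hp
  have hs1 : s < 1 := by
    have := Real.sqrt_lt_sqrt hp.le hp1
    simpa [hsdef] using this
  have hss : s * s = p := Real.mul_self_sqrt hp.le
  set ε : ℝ := p * s with hεdef
  have hε0 : 0 < ε := by positivity
  have hεp : ε < p := by nlinarith
  have hε1 : ε < 1 := by nlinarith
  -- exp ε ≤ (1-ε)⁻¹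
  have hexpε : Real.exp ε ≤ (1 - ε)⁻¹ := by
    have h1 : 1 - ε ≤ Real.exp (-ε) := by linarith [Real.add_one_le_exp (-ε)]
    have h2 : (Real.exp (-ε))⁻¹ ≤ (1 - ε)⁻¹ := inv_anti₀ (by linarith) h1
    rwa [← Real.exp_neg, neg_neg] at h2
  set q : ℝ := r * Real.exp ε with hqdef
  have hq0 : 0 < q := by positivity
  have hqle : q ≤ r * (1 - ε)⁻¹ := mul_le_mul_of_nonneg_left hexpε hr0.le
  have hq1 : q < 1 := by
    have : r * (1 - ε)⁻¹ < 1 := by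
      rw [mul_inv_lt_iff₀ (by linarith)]
      simp [hrdef]; nlinarith
    linarith
  have hgap : (p - ε) / (1 - ε) ≤ 1 - q := by
    have h2 : (p - ε) / (1 - ε) + r * (1 - ε)⁻¹ = 1 := by
      field_simp [hrdef]
      rw [div_eq_one_iff_eq (by linarith)]; linarith
    linarith
  have hgap0 : 0 < (p - ε) / (1 - ε) := by
    apply div_pos <;> linarith
  -- log bound
  have hlog : -Real.log r ≤ p / r := by
    have h := Real.log_le_sub_one_of_pos (x := r⁻¹) (by positivity)
    rw [Real.log_inv] at h
    have : r⁻¹ - 1 = p / r := by field_simp [hrdef]; linarith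
    linarith
  set C : ℝ := Real.exp (s / (2 * r ^ 2) + ε) with hCdef
  have hC0 : 0 < C := Real.exp_pos _
  -- per-term upper bound for the negative-exponent sum
  have key2 : ∀ j : ℕ, p * r ^ j * r ^ (-Real.sqrt (2 * ((j : ℝ) + 1))) ≤ p * C * q ^ j := by
    intro j
    set x : ℝ := Real.sqrt (2 * ((j : ℝ) + 1)) with hxdef
    have hx0 : 0 ≤ x := Real.sqrt_nonneg _
    have hx2 : x ^ 2 = 2 * ((j : ℝ) + 1) := Real.sq_sqrt (by positivity)
    have hkey : 2 * (r * s) * x ≤ 1 + 2 * (r * s) ^ 2 * ((j : ℝ) + 1) := by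
      nlinarith [sq_nonneg (1 - r * s * x)]
    have hexpo : Real.log r * (-x) ≤ s / (2 * r ^ 2) + ε * ((j : ℝ) + 1) := by
      have h1 : Real.log r * (-x) = x * (-Real.log r) := by ring
      have h2 : x * (-Real.log r) ≤ x * (p / r) :=
        mul_le_mul_of_nonneg_left hlog hx0
      have h3 : x * (p / r) ≤ s / (2 * r ^ 2) + ε * ((j : ℝ) + 1) := by
        rw [div_add' _ _ _ (by positivity),
          show x * (p / r) = x * p / r from (mul_div_assoc _ _ _).symm,
          div_le_div_iff₀ hr0 (by positivity)]
        have hp' : p = s * s := hss.symm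
        have hε' : ε = s * s * s := by rw [hεdef, hp']
        rw [hp', hε']
        nlinarith [mul_le_mul_of_nonneg_left hkey (by positivity : (0:ℝ) ≤ s * r)]
      linarith
    rw [Real.rpow_def_of_pos hr0]
    have h4 : Real.exp (Real.log r * (-x)) ≤ Real.exp (s / (2 * r ^ 2) + ε * ((j : ℝ) + 1)) :=
      Real.exp_le_exp.2 hexpo
    have h5 : Real.exp (s / (2 * r ^ 2) + ε * ((j : ℝ) + 1)) = C * Real.exp ε ^ j := by
      rw [hCdef, ← Real.exp_nat_mul, ← Real.exp_add]
      ring_nf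
    calc p * r ^ j * Real.exp (Real.log r * (-x))
        ≤ p * r ^ j * (C * Real.exp ε ^ j) := by
          apply mul_le_mul_of_nonneg_left (h5 ▸ h4) (by positivity)
      _ = p * C * q ^ j := by rw [hqdef, mul_pow]; ring
  have hsum_geo_q : Summable (fun j : ℕ => p * C * q ^ j) :=
    (summable_geometric_of_lt_one hq0.le hq1).mul_left _
  have hsum2 : Summable (fun j : ℕ => p * r ^ j * r ^ (-Real.sqrt (2 * ((j : ℝ) + 1)))) := by
    apply Summable.of_nonneg_of_le (fun j => by positivity) key2 hsum_geo_q
  have h1mr : 1 - r = p := by rw [hrdef]; ring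
  have habs : ‖r‖ < 1 := by rw [Real.norm_eq_abs, abs_of_pos hr0]; exact hr1
  have hgeo : Summable (fun j : ℕ => (r : ℝ) ^ j) := summable_geometric_of_lt_one hr0.le hr1
  have hsum_geo : Summable (fun j : ℕ => p * r ^ j) := hgeo.mul_left _
  have hval : ∑' j : ℕ, p * r ^ j = 1 := by
    rw [tsum_mul_left, tsum_geometric_of_lt_one hr0.le hr1, h1mr]
    field_simp
  refine ⟨hsum2, ?_, ?_, ?_, ?_⟩
  · -- upper bound for negative-exponent sum
    calc (∑' j : ℕ, p * r ^ j * r ^ (-Real.sqrt (2 * ((j : ℝ) + 1))))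
        ≤ ∑' j : ℕ, p * C * q ^ j := Summable.tsum_le_tsum key2 hsum2 hsum_geo_q
      _ = p * C * (1 - q)⁻¹ := by
          rw [tsum_mul_left, tsum_geometric_of_lt_one hq0.le hq1]
      _ ≤ p * C * ((p - ε) / (1 - ε))⁻¹ := by
          apply mul_le_mul_of_nonneg_left (inv_anti₀ hgap0 hgap) (by positivity)
      _ = C * (1 - ε) / (1 - s) := by
          have h1 : p - ε = p * (1 - s) := by rw [hεdef]; ring
          have hs' : (0:ℝ) < 1 - s := by linarith
          rw [h1, inv_div, ← mul_div_assoc]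
          rw [div_eq_div_iff (ne_of_gt (mul_pos hp hs')) (ne_of_gt hs')]
          ring
  · -- lower bound 1 for negative-exponent sum
    calc (1 : ℝ) = ∑' j : ℕ, p * r ^ j := hval.symm
      _ ≤ ∑' j : ℕ, p * r ^ j * r ^ (-Real.sqrt (2 * ((j : ℝ) + 1))) := by
          apply Summable.tsum_le_tsum _ hsum_geo hsum2
          intro j
          calc p * r ^ j = p * r ^ j * 1 := (mul_one _).symm
            _ ≤ p * r ^ j * r ^ (-Real.sqrt (2 * ((j : ℝ) + 1))) := by
                apply mul_le_mul_of_nonneg_left _ (by positivity)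
                exact Real.one_le_rpow_of_pos_of_le_one_of_nonpos hr0 hr1.le
                  (neg_nonpos.2 (Real.sqrt_nonneg _))
  · -- upper bound 1 for positive-exponent sum
    have hf₁le : ∀ j : ℕ, p * r ^ j * r ^ (Real.sqrt (2 * ((j : ℝ) + 1))) ≤ p * r ^ j := by
      intro j
      calc p * r ^ j * r ^ (Real.sqrt (2 * ((j : ℝ) + 1)))
          ≤ p * r ^ j * 1 := by
            apply mul_le_mul_of_nonneg_left _ (by positivity)
            exact Real.rpow_le_one hr0.le hr1.le (Real.sqrt_nonneg _)
        _ = p * r ^ j := mul_one _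
    have hsum1 : Summable (fun j : ℕ => p * r ^ j * r ^ (Real.sqrt (2 * ((j : ℝ) + 1)))) :=
      Summable.of_nonneg_of_le (fun j => by positivity) hf₁le hsum_geo
    calc (∑' j : ℕ, p * r ^ j * r ^ (Real.sqrt (2 * ((j : ℝ) + 1))))
        ≤ ∑' j : ℕ, p * r ^ j := Summable.tsum_le_tsum hf₁le hsum1 hsum_geo
      _ = 1 := hval
  · -- lower bound for positive-exponent sum
    have hsum1 : Summable (fun j : ℕ => p * r ^ j * r ^ (Real.sqrt (2 * ((j : ℝ) + 1)))) := by
      apply Summable.of_nonneg_of_le (fun j => by positivity) _ hsum_geo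
      intro j
      calc p * r ^ j * r ^ (Real.sqrt (2 * ((j : ℝ) + 1)))
          ≤ p * r ^ j * 1 := by
            apply mul_le_mul_of_nonneg_left _ (by positivity)
            exact Real.rpow_le_one hr0.le hr1.le (Real.sqrt_nonneg _)
        _ = p * r ^ j := mul_one _
    have hjsum : Summable (fun j : ℕ => ((j : ℝ)) * r ^ j) :=
      (summable_pow_mul_geometric_of_norm_lt_one 1 habs).congr (fun j => by ring)
    have hj2 : Summable (fun j : ℕ => ((j : ℝ) + 2) * r ^ j) :=
      (hjsum.add (hgeo.mul_left 2)).congr (fun j => by ring)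
    have hxle : ∀ j : ℕ, Real.sqrt (2 * ((j : ℝ) + 1)) ≤ ((j : ℝ) + 2) := by
      intro j
      have h := Real.sqrt_le_sqrt
        (show 2 * ((j : ℝ) + 1) ≤ ((j : ℝ) + 2) ^ 2 by nlinarith [sq_nonneg ((j : ℝ))])
      rwa [Real.sqrt_sq (by positivity)] at h
    have hT : Summable (fun j : ℕ => Real.sqrt (2 * ((j : ℝ) + 1)) * r ^ j) := by
      apply Summable.of_nonneg_of_le (fun j => by positivity) _ hj2
      exact fun j => mul_le_mul_of_nonneg_right (hxle j) (by positivity)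
    have hj1 : Summable (fun j : ℕ => ((j : ℝ) + 1) * r ^ j) :=
      (hjsum.add hgeo).congr (fun j => by ring)
    have hj1val : ∑' j : ℕ, ((j : ℝ) + 1) * r ^ j = 1 / p ^ 2 := by
      have hc : ∀ j : ℕ, ((j : ℝ) + 1) * r ^ j = (j : ℝ) * r ^ j + r ^ j := fun j => by ring
      rw [tsum_congr hc, Summable.tsum_add hjsum hgeo, tsum_geometric_of_lt_one hr0.le hr1,
        tsum_coe_mul_geometric_of_norm_lt_one habs, h1mr]
      rw [hrdef]
      field_simp
      ring
    have hTbound : ∑' j : ℕ, Real.sqrt (2 * ((j : ℝ) + 1)) * r ^ j ≤ 3 / (2 * (s * s * s)) := by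
      have hub : ∀ j : ℕ, Real.sqrt (2 * ((j : ℝ) + 1)) * r ^ j ≤
          s * (((j : ℝ) + 1) * r ^ j) + (1 / (2 * s)) * r ^ j := by
        intro j
        have hx0 : 0 ≤ Real.sqrt (2 * ((j : ℝ) + 1)) := Real.sqrt_nonneg _
        have hx2 : Real.sqrt (2 * ((j : ℝ) + 1)) ^ 2 = 2 * ((j : ℝ) + 1) :=
          Real.sq_sqrt (by positivity)
        have h2s : 2 * s * Real.sqrt (2 * ((j : ℝ) + 1)) ≤ 2 * (s * s) * ((j : ℝ) + 1) + 1 := by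
          nlinarith [sq_nonneg (s * Real.sqrt (2 * ((j : ℝ) + 1)) - 1)]
        have hxs : Real.sqrt (2 * ((j : ℝ) + 1)) ≤ s * ((j : ℝ) + 1) + 1 / (2 * s) := by
          have hc : (0 : ℝ) < 2 * s := by positivity
          have heq : 2 * s * (s * ((j : ℝ) + 1) + 1 / (2 * s)) =
              2 * (s * s) * ((j : ℝ) + 1) + 1 := by field_simp
          exact (mul_le_mul_iff_right₀ hc).1 (by rw [heq]; linarith)
        have := mul_le_mul_of_nonneg_right hxs (show (0:ℝ) ≤ r ^ j by positivity)
        calc Real.sqrt (2 * ((j : ℝ) + 1)) * r ^ j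
            ≤ (s * ((j : ℝ) + 1) + 1 / (2 * s)) * r ^ j := this
          _ = s * (((j : ℝ) + 1) * r ^ j) + (1 / (2 * s)) * r ^ j := by ring
      have hsumub : Summable (fun j : ℕ => s * (((j : ℝ) + 1) * r ^ j) + (1 / (2 * s)) * r ^ j) :=
        (hj1.mul_left s).add (hgeo.mul_left _)
      calc ∑' j : ℕ, Real.sqrt (2 * ((j : ℝ) + 1)) * r ^ j
          ≤ ∑' j : ℕ, (s * (((j : ℝ) + 1) * r ^ j) + (1 / (2 * s)) * r ^ j) :=
            Summable.tsum_le_tsum hub hT hsumub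
        _ = s * (1 / p ^ 2) + (1 / (2 * s)) * (1 - r)⁻¹ := by
            rw [Summable.tsum_add (hj1.mul_left s) (hgeo.mul_left _), tsum_mul_left, tsum_mul_left,
              hj1val, tsum_geometric_of_lt_one hr0.le hr1]
        _ = 3 / (2 * (s * s * s)) := by
            rw [h1mr, ← hss]
            field_simp
            ring
    have hlow : ∀ j : ℕ, p * r ^ j - p ^ 2 / r * (Real.sqrt (2 * ((j : ℝ) + 1)) * r ^ j) ≤
        p * r ^ j * r ^ (Real.sqrt (2 * ((j : ℝ) + 1))) := by
      intro j
      set x : ℝ := Real.sqrt (2 * ((j : ℝ) + 1)) with hxdef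
      have hx0 : 0 ≤ x := Real.sqrt_nonneg _
      have h1 : Real.log r * x + 1 ≤ r ^ x := by
        rw [Real.rpow_def_of_pos hr0]; exact Real.add_one_le_exp _
      have h2 : -Real.log r * x ≤ p / r * x := mul_le_mul_of_nonneg_right hlog hx0
      have h3 : 1 - p / r * x ≤ r ^ x := by nlinarith
      have h4 := mul_le_mul_of_nonneg_left h3 (show (0:ℝ) ≤ p * r ^ j by positivity)
      calc p * r ^ j - p ^ 2 / r * (x * r ^ j) = p * r ^ j * (1 - p / r * x) := by ring
        _ ≤ p * r ^ j * r ^ x := h4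
    have hsuml : Summable (fun j : ℕ =>
        p * r ^ j - p ^ 2 / r * (Real.sqrt (2 * ((j : ℝ) + 1)) * r ^ j)) :=
      hsum_geo.sub (hT.mul_left _)
    have hlval : ∑' j : ℕ, (p * r ^ j - p ^ 2 / r * (Real.sqrt (2 * ((j : ℝ) + 1)) * r ^ j)) =
        1 - p ^ 2 / r * ∑' j : ℕ, Real.sqrt (2 * ((j : ℝ) + 1)) * r ^ j := by
      rw [Summable.tsum_sub hsum_geo (hT.mul_left _), hval, tsum_mul_left]
    have herr : p ^ 2 / r * (∑' j : ℕ, Real.sqrt (2 * ((j : ℝ) + 1)) * r ^ j) ≤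
        3 * s / (2 * r) := by
      have heq : p ^ 2 / r * (3 / (2 * (s * s * s))) = 3 * s / (2 * r) := by
        rw [← hss]; field_simp
      calc p ^ 2 / r * (∑' j : ℕ, Real.sqrt (2 * ((j : ℝ) + 1)) * r ^ j)
          ≤ p ^ 2 / r * (3 / (2 * (s * s * s))) :=
            mul_le_mul_of_nonneg_left hTbound (by positivity)
        _ = 3 * s / (2 * r) := heq
    calc 1 - 3 * s / (2 * r)
        ≤ 1 - p ^ 2 / r * ∑' j : ℕ, Real.sqrt (2 * ((j : ℝ) + 1)) * r ^ j := by linarith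
      _ = ∑' j : ℕ, (p * r ^ j - p ^ 2 / r * (Real.sqrt (2 * ((j : ℝ) + 1)) * r ^ j)) :=
          hlval.symm
      _ ≤ ∑' j : ℕ, p * r ^ j * r ^ (Real.sqrt (2 * ((j : ℝ) + 1))) :=
          Summable.tsum_le_tsum hlow hsuml hsum1

/-- for `q_A` geometric with `P(q_A = k) = (2/A)(1-2/A)^{k-1}`
for `k ≥ 1`, one has `E[(1-2/A)^{√(2 q_A)}] → 1` and
`E[(1-2/A)^{-√(2 q_A)}] → 1` as `A → ∞`; moreover the latter expectation is
finite (the defining series is summable) for every `A > 2`.  The expectations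
are written as the sums over `k ≥ 1` (indexed by `k = j + 1`, `j : ℕ`), with
real-exponent powers. -/
theorem statement12 :
    Filter.Tendsto
      (fun A : ℝ => ∑' j : ℕ,
        (2 / A) * (1 - 2 / A) ^ j *
          (1 - 2 / A) ^ (Real.sqrt (2 * ((j : ℝ) + 1))))
      Filter.atTop (nhds 1) ∧
    Filter.Tendsto
      (fun A : ℝ => ∑' j : ℕ,
        (2 / A) * (1 - 2 / A) ^ j *
          (1 - 2 / A) ^ (-Real.sqrt (2 * ((j : ℝ) + 1))))
      Filter.atTop (nhds 1) ∧
    ∀ A : ℝ, 2 < A →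
      Summable (fun j : ℕ =>
        (2 / A) * (1 - 2 / A) ^ j *
          (1 - 2 / A) ^ (-Real.sqrt (2 * ((j : ℝ) + 1)))) := by
  have hp' : ∀ A : ℝ, 2 < A → 0 < 2 / A ∧ 2 / A < 1 := fun A hA =>
    ⟨div_pos two_pos (by linarith), (div_lt_one (by linarith)).2 (by linarith)⟩
  have hev : ∀ᶠ A : ℝ in atTop, (2 : ℝ) < A := eventually_gt_atTop 2
  have hptend : Tendsto (fun A : ℝ => 2 / A) atTop (nhds 0) :=
    tendsto_const_nhds.div_atTop tendsto_id
  have hGcont : ContinuousAt (fun t : ℝ =>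
      Real.exp (Real.sqrt t / (2 * (1 - t) ^ 2) + t * Real.sqrt t) *
        (1 - t * Real.sqrt t) / (1 - Real.sqrt t)) 0 := by
    apply ContinuousAt.div
    · apply ContinuousAt.mul
      · apply Real.continuous_exp.continuousAt.comp
        apply ContinuousAt.add
        · exact ContinuousAt.div Real.continuous_sqrt.continuousAt (by fun_prop) (by norm_num)
        · exact continuousAt_id.mul Real.continuous_sqrt.continuousAt
      · exact continuousAt_const.sub (continuousAt_id.mul Real.continuous_sqrt.continuousAt)
    · exact continuousAt_const.sub Real.continuous_sqrt.continuousAt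
    · simp
  have hG : Tendsto (fun A : ℝ =>
      Real.exp (Real.sqrt (2 / A) / (2 * (1 - 2 / A) ^ 2) + (2 / A) * Real.sqrt (2 / A)) *
        (1 - (2 / A) * Real.sqrt (2 / A)) / (1 - Real.sqrt (2 / A))) atTop (nhds 1) := by
    have h := hGcont.tendsto.comp hptend
    simpa only [Function.comp_def, Real.sqrt_zero, mul_zero, zero_mul, zero_div, add_zero,
      sub_zero, Real.exp_zero, one_mul, mul_one, div_one] using h
  have hHcont : ContinuousAt (fun t : ℝ => 1 - 3 * Real.sqrt t / (2 * (1 - t))) 0 := by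
    apply ContinuousAt.sub continuousAt_const
    exact ContinuousAt.div (continuousAt_const.mul Real.continuous_sqrt.continuousAt)
      (by fun_prop) (by norm_num)
  have hH : Tendsto (fun A : ℝ => 1 - 3 * Real.sqrt (2 / A) / (2 * (1 - 2 / A)))
      atTop (nhds 1) := by
    have h := hHcont.tendsto.comp hptend
    simpa only [Function.comp_def, Real.sqrt_zero, mul_zero, zero_div, sub_zero] using h
  refine ⟨?_, ?_, fun A hA => (geo_aux (2 / A) (hp' A hA).1 (hp' A hA).2).1⟩
  · apply tendsto_of_tendsto_of_tendsto_of_le_of_le' hH tendsto_const_nhds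
    · filter_upwards [hev] with A hA
      exact (geo_aux (2 / A) (hp' A hA).1 (hp' A hA).2).2.2.2.2
    · filter_upwards [hev] with A hA
      exact (geo_aux (2 / A) (hp' A hA).1 (hp' A hA).2).2.2.2.1
  · apply tendsto_of_tendsto_of_tendsto_of_le_of_le' tendsto_const_nhds hG
    · filter_upwards [hev] with A hA
      exact (geo_aux (2 / A) (hp' A hA).1 (hp' A hA).2).2.2.1
    · filter_upwards [hev] with A hA
      exact (geo_aux (2 / A) (hp' A hA).1 (hp' A hA).2).2.1
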